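/- Let m ≥ 5 be an odd integer and let n = 3(2^m − 1). Then: (i) the multiplicative order of 2 modulo n is 2m; (ii) the least positive integer t with 3·2^t ≡ 3 (mod n) is m; (iii) the least positive integer t with 5·2^t ≡ 5 (mod n) is 2m; (iv) there is no integer j ≥ 0 with 2^j ≡ 5 (mod n); (v) there is no integer j ≥ 0 with 2^j ≡ n − 1 (mod n); (vi) there is no integer j ≥ 0 with 3·2^j ≡ n − 3 (mod n). -/
import Mathlib

private lemma pow2_mod (k : ℕ) (hk : 2 ≤ k) (j : ℕ) :
    2 ^ j % (2 ^ k - 1) = 2 ^ (j % k) := by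
  have hK4 : (4:ℕ) ≤ 2 ^ k := by
    calc (4:ℕ) = 2 ^ 2 := rfl
    _ ≤ 2 ^ k := Nat.pow_le_pow_right (by norm_num) hk
  have h1 : (2:ℕ) ^ k ≡ 1 [MOD 2 ^ k - 1] := by
    show 2 ^ k % (2 ^ k - 1) = 1 % (2 ^ k - 1)
    conv_lhs => rw [show (2:ℕ) ^ k = (2 ^ k - 1) + 1 by omega]
    exact Nat.add_mod_left _ _
  have hj : (2:ℕ) ^ j = (2 ^ k) ^ (j / k) * 2 ^ (j % k) := by
    rw [← pow_mul, ← pow_add, Nat.div_add_mod]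
  have h2 : (2:ℕ) ^ j ≡ 2 ^ (j % k) [MOD 2 ^ k - 1] := by
    calc (2:ℕ) ^ j = (2 ^ k) ^ (j / k) * 2 ^ (j % k) := hj
    _ ≡ 1 ^ (j / k) * 2 ^ (j % k) [MOD 2 ^ k - 1] := ((h1.pow _).mul_right _)
    _ = 2 ^ (j % k) := by rw [one_pow, one_mul]
  have hlt : 2 ^ (j % k) < 2 ^ k - 1 := by
    have h3 : 2 ^ (j % k) ≤ 2 ^ (k - 1) :=
      Nat.pow_le_pow_right (by norm_num) (by have := Nat.mod_lt j (show 0 < k by omega); omega)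
    have h4 : (2:ℕ) ^ k = 2 * 2 ^ (k - 1) := by
      conv_lhs => rw [show k = (k - 1) + 1 by omega]
      rw [pow_succ]; ring
    have h5 : (2:ℕ) ≤ 2 ^ (k - 1) := by
      calc (2:ℕ) = 2 ^ 1 := rfl
      _ ≤ 2 ^ (k - 1) := Nat.pow_le_pow_right (by norm_num) (by omega)
    omega
  calc 2 ^ j % (2 ^ k - 1) = 2 ^ (j % k) % (2 ^ k - 1) := h2
  _ = 2 ^ (j % k) := Nat.mod_eq_of_lt hlt

/-- number-theoretic facts about `n = 3(2^m - 1)` for odd `m ≥ 5`: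
(i) the multiplicative order of `2` modulo `n` is `2m`;
(ii) the least positive `t` with `3·2^t ≡ 3 (mod n)` is `m`;
(iii) the least positive `t` with `5·2^t ≡ 5 (mod n)` is `2m`;
(iv) no `j ≥ 0` has `2^j ≡ 5 (mod n)`;
(v) no `j ≥ 0` has `2^j ≡ n - 1 (mod n)`;
(vi) no `j ≥ 0` has `3·2^j ≡ n - 3 (mod n)`. -/
theorem statement14 (m : ℕ) (hm : 5 ≤ m) (hmo : Odd m)
    (n : ℕ) (hn : n = 3 * (2 ^ m - 1)) :
    IsLeast {t : ℕ | 0 < t ∧ 2 ^ t ≡ 1 [MOD n]} (2 * m) ∧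
    IsLeast {t : ℕ | 0 < t ∧ 3 * 2 ^ t ≡ 3 [MOD n]} m ∧
    IsLeast {t : ℕ | 0 < t ∧ 5 * 2 ^ t ≡ 5 [MOD n]} (2 * m) ∧
    (¬ ∃ j : ℕ, 2 ^ j ≡ 5 [MOD n]) ∧
    (¬ ∃ j : ℕ, 2 ^ j ≡ n - 1 [MOD n]) ∧
    (¬ ∃ j : ℕ, 3 * 2 ^ j ≡ n - 3 [MOD n]) := by
  have hm1 : m % 2 = 1 := Nat.odd_iff.mp hmo
  have h2m : (32:ℕ) ≤ 2 ^ m := by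
    calc (32:ℕ) = 2 ^ 5 := rfl
    _ ≤ 2 ^ m := Nat.pow_le_pow_right (by norm_num) hm
  have key : ∀ j, 2 ^ j % (2 ^ m - 1) = 2 ^ (j % m) := pow2_mod m (by omega)
  have key3 : ∀ j, 2 ^ j % 3 = 2 ^ (j % 2) := by
    have h := pow2_mod 2 le_rfl
    norm_num at h
    exact h
  -- M divides n
  have hMdvd : (2 ^ m - 1) ∣ n := ⟨3, by rw [hn]; ring⟩
  -- M mod 3
  have hmod3 : (2:ℕ) ^ m % 3 = 2 := by rw [key3, hm1]; norm_num
  have cop3M : Nat.Coprime 3 (2 ^ m - 1) :=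
    (Nat.prime_three.coprime_iff_not_dvd).mpr (by omega)
  have cop2m : Nat.Coprime 2 m :=
    (Nat.prime_two.coprime_iff_not_dvd).mpr (by omega)
  -- order of 2 mod M is m
  have H2 : ∀ t, (2 ^ t ≡ 1 [MOD 2 ^ m - 1]) ↔ m ∣ t := by
    intro t
    constructor
    · intro h
      have h' : 2 ^ t % (2 ^ m - 1) = 1 % (2 ^ m - 1) := h
      rw [key, Nat.mod_eq_of_lt (by omega : (1:ℕ) < 2 ^ m - 1)] at h'
      have ht : t % m = 0 := by
        by_contra hc
        have : 2 ≤ 2 ^ (t % m) := by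
          calc (2:ℕ) = 2 ^ 1 := rfl
          _ ≤ 2 ^ (t % m) := Nat.pow_le_pow_right (by norm_num) (by omega)
        omega
      exact Nat.dvd_of_mod_eq_zero ht
    · rintro ⟨c, rfl⟩
      show 2 ^ (m * c) % (2 ^ m - 1) = 1 % (2 ^ m - 1)
      rw [key, Nat.mul_mod_right, pow_zero, Nat.mod_eq_of_lt (by omega : (1:ℕ) < 2 ^ m - 1)]
  -- order of 2 mod 3 is 2
  have H3 : ∀ t, (2 ^ t ≡ 1 [MOD 3]) ↔ 2 ∣ t := by
    intro t
    constructor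
    · intro h
      have h' : 2 ^ t % 3 = 1 % 3 := h
      rw [key3] at h'
      have ht : t % 2 = 0 := by
        rcases (by omega : t % 2 = 0 ∨ t % 2 = 1) with h0 | h1
        · exact h0
        · rw [h1] at h'; norm_num at h'
      exact Nat.dvd_of_mod_eq_zero ht
    · rintro ⟨c, rfl⟩
      show 2 ^ (2 * c) % 3 = 1 % 3
      rw [key3, Nat.mul_mod_right, pow_zero]; norm_num
  -- order of 2 mod n is 2m
  have H1 : ∀ t, (2 ^ t ≡ 1 [MOD n]) ↔ 2 * m ∣ t := by
    intro t
    rw [hn, ← Nat.modEq_and_modEq_iff_modEq_mul cop3M, H3 t, H2 t]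
    constructor
    · rintro ⟨h2, hm'⟩; exact cop2m.mul_dvd_of_dvd_of_dvd h2 hm'
    · intro h; exact ⟨dvd_trans (dvd_mul_right 2 m) h, dvd_trans (dvd_mul_left m 2) h⟩
  -- (ii) iff
  have Hii : ∀ t, (3 * 2 ^ t ≡ 3 [MOD n]) ↔ m ∣ t := by
    intro t
    have h1 : (1:ℕ) ≤ 2 ^ t := Nat.one_le_two_pow
    constructor
    · intro h
      have hd : n ∣ 3 * 2 ^ t - 3 := (Nat.modEq_iff_dvd' (by omega)).mp h.symm
      rw [show 3 * 2 ^ t - 3 = 3 * (2 ^ t - 1) by omega, hn] at hd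
      have hd' : (2 ^ m - 1) ∣ (2 ^ t - 1) :=
        (Nat.mul_dvd_mul_iff_left (by norm_num : (0:ℕ) < 3)).mp hd
      exact (H2 t).mp ((Nat.modEq_iff_dvd' h1).mpr hd').symm
    · intro h
      have h2 : 2 ^ t ≡ 1 [MOD 2 ^ m - 1] := (H2 t).mpr h
      have hd : (2 ^ m - 1) ∣ (2 ^ t - 1) := (Nat.modEq_iff_dvd' h1).mp h2.symm
      have hd' : n ∣ 3 * 2 ^ t - 3 := by
        rw [show 3 * 2 ^ t - 3 = 3 * (2 ^ t - 1) by omega, hn]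
        exact Nat.mul_dvd_mul_left 3 hd
      exact ((Nat.modEq_iff_dvd' (by omega)).mpr hd').symm
  -- coprimality of n with 5
  have h5 : (2:ℕ) ^ m % 5 = 2 ∨ (2:ℕ) ^ m % 5 = 3 := by
    have hr : m % 4 = 1 ∨ m % 4 = 3 := by omega
    have hpow : (2:ℕ) ^ m % 5 = 2 ^ (m % 4) % 5 := by
      conv_lhs => rw [show m = 4 * (m / 4) + m % 4 from (Nat.div_add_mod m 4).symm]
      rw [pow_add, pow_mul, Nat.mul_mod, Nat.pow_mod]
      norm_num
    rcases hr with h | h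
    · left; rw [hpow, h]; norm_num
    · right; rw [hpow, h]; norm_num
  have cop5n : Nat.Coprime 5 n := by
    refine (Nat.prime_five.coprime_iff_not_dvd).mpr ?_
    rw [hn]; omega
  -- (iii) iff
  have Hiii : ∀ t, (5 * 2 ^ t ≡ 5 [MOD n]) ↔ 2 * m ∣ t := by
    intro t
    have h1 : (1:ℕ) ≤ 2 ^ t := Nat.one_le_two_pow
    constructor
    · intro h
      have hd : n ∣ 5 * 2 ^ t - 5 := (Nat.modEq_iff_dvd' (by omega)).mp h.symm
      rw [show 5 * 2 ^ t - 5 = (2 ^ t - 1) * 5 by omega] at hd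
      have hd' : n ∣ (2 ^ t - 1) := cop5n.symm.dvd_of_dvd_mul_right hd
      exact (H1 t).mp ((Nat.modEq_iff_dvd' h1).mpr hd').symm
    · intro h
      have h2 : 2 ^ t ≡ 1 [MOD n] := (H1 t).mpr h
      have hd : n ∣ (2 ^ t - 1) := (Nat.modEq_iff_dvd' h1).mp h2.symm
      have hd' : n ∣ 5 * 2 ^ t - 5 := by
        rw [show 5 * 2 ^ t - 5 = 5 * (2 ^ t - 1) by omega]
        exact Dvd.dvd.mul_left hd 5
      exact ((Nat.modEq_iff_dvd' (by omega)).mpr hd').symm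
  -- final contradiction helper for (v), (vi)
  have hfinal : ∀ r, r < m → 2 ^ r ≠ 2 ^ m - 2 := by
    intro r hr heq
    have h1 : 2 ^ r ≤ 2 ^ (m - 1) := Nat.pow_le_pow_right (by norm_num) (by omega)
    have h2 : (2:ℕ) ^ m = 2 * 2 ^ (m - 1) := by
      conv_lhs => rw [show m = (m - 1) + 1 by omega]
      rw [pow_succ]; ring
    have h3 : (16:ℕ) ≤ 2 ^ (m - 1) := by
      calc (16:ℕ) = 2 ^ 4 := rfl
      _ ≤ 2 ^ (m - 1) := Nat.pow_le_pow_right (by norm_num) (by omega)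
    omega
  have hm0 : 0 < m := by omega
  refine ⟨?_, ?_, ?_, ?_, ?_, ?_⟩
  · exact ⟨⟨by omega, (H1 (2 * m)).mpr dvd_rfl⟩,
      fun t ht => Nat.le_of_dvd ht.1 ((H1 t).mp ht.2)⟩
  · exact ⟨⟨by omega, (Hii m).mpr dvd_rfl⟩,
      fun t ht => Nat.le_of_dvd ht.1 ((Hii t).mp ht.2)⟩
  · exact ⟨⟨by omega, (Hiii (2 * m)).mpr dvd_rfl⟩,
      fun t ht => Nat.le_of_dvd ht.1 ((Hiii t).mp ht.2)⟩
  · -- (iv)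
    rintro ⟨j, hj⟩
    have hjM : 2 ^ j % (2 ^ m - 1) = 5 % (2 ^ m - 1) := hj.of_dvd hMdvd
    rw [key, Nat.mod_eq_of_lt (by omega : (5:ℕ) < 2 ^ m - 1)] at hjM
    rcases Nat.lt_or_ge (j % m) 3 with h | h
    · have h4 : 2 ^ (j % m) ≤ 2 ^ 2 := Nat.pow_le_pow_right (by norm_num) (by omega)
      norm_num at h4; omega
    · have h8 : (8:ℕ) ≤ 2 ^ (j % m) := by
        calc (8:ℕ) = 2 ^ 3 := rfl
        _ ≤ 2 ^ (j % m) := Nat.pow_le_pow_right (by norm_num) h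
      omega
  · -- (v)
    rintro ⟨j, hj⟩
    have hjM : 2 ^ j % (2 ^ m - 1) = (n - 1) % (2 ^ m - 1) := hj.of_dvd hMdvd
    rw [key, show n - 1 = (2 ^ m - 2) + (2 ^ m - 1) * 2 by rw [hn]; omega,
      Nat.add_mul_mod_self_left, Nat.mod_eq_of_lt (by omega : (2:ℕ) ^ m - 2 < 2 ^ m - 1)] at hjM
    exact hfinal (j % m) (Nat.mod_lt j hm0) hjM
  · -- (vi)
    rintro ⟨j, hj⟩
    have hjM : 3 * 2 ^ j ≡ n - 3 [MOD 2 ^ m - 1] := hj.of_dvd hMdvd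
    rw [show n - 3 = 3 * (2 ^ m - 2) by rw [hn]; omega] at hjM
    have hj2 : 2 ^ j ≡ 2 ^ m - 2 [MOD 2 ^ m - 1] :=
      Nat.ModEq.cancel_left_of_coprime cop3M.symm hjM
    have hjM' : 2 ^ j % (2 ^ m - 1) = (2 ^ m - 2) % (2 ^ m - 1) := hj2
    rw [key, Nat.mod_eq_of_lt (by omega : (2:ℕ) ^ m - 2 < 2 ^ m - 1)] at hjM'
    exact hfinal (j % m) (Nat.mod_lt j hm0) hjM'
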